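/- arXiv:1706.04835 — 4 statements merged into one kernel-verified Lean document; each statement's English description precedes it below -/
import Mathlib

section
/- If f : X → L is a morphism of locales with X locally positive, then the regular image of X in L (the sublocale given by the congruence/nucleus induced by f, equivalently the locale whose frame is the image of the frame homomorphism's right adjoint situation — concretely, the sublocale of L whose opens are ordered as L with U ∼ V iff f*U = f*V) is locally positive. -/
/-- An element `U` of a frame is positive if every cover of `U` is inhabited. -/
def Positive {L : Type*} [Order.Frame L] (U : L) : Prop :=
  ∀ S : Set L, U ≤ sSup S → S.Nonempty

/-- A frame is locally positive if every element is a supremum of positive elements. -/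
def LocallyPositive (L : Type*) [Order.Frame L] : Prop :=
  ∀ U : L, ∃ S : Set L, (∀ V ∈ S, Positive V) ∧ U = sSup S

/-- Positivity of the class of `U` in the regular image of a locale morphism
`f : X → L` (given by the frame homomorphism `f : O(L) → O(X)`): the image frame is
`O(L)/∼` with `U ∼ V` iff `f U = f V`, its order is `[U] ≤ [V]` iff `f U ≤ f V` and
the supremum of a set `S` of classes is the class of `sSup S`.  So `[U]` is positive
iff every set `S ⊆ L` with `f U ≤ f (sSup S)` is nonempty. -/
def ImgPositive {X L : Type*} [Order.Frame X] [Order.Frame L]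
    (f : FrameHom L X) (U : L) : Prop :=
  ∀ S : Set L, f U ≤ f (sSup S) → S.Nonempty

/-- If `f : X → L` is a morphism of locales (i.e. a frame homomorphism
`f : O(L) → O(X)`) with `X` locally positive, then the regular image of `X` in `L`
is locally positive: in the quotient frame, every class `[U]` is the supremum of the
classes `[V] ≤ [U]` which are positive. -/
theorem stmt4 {X L : Type*} [Order.Frame X] [Order.Frame L] (f : FrameHom L X)
    (hX : LocallyPositive X) (U : L) :
    f U = f (sSup {V : L | f V ≤ f U ∧ ImgPositive f V}) := by
  apply le_antisymm
  · -- Use local positivity of X on f U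
    obtain ⟨T, hTpos, hT⟩ := hX (f U)
    rcases T.eq_empty_or_nonempty with rfl | ⟨W, hW⟩
    · simp only [sSup_empty] at hT
      rw [hT]; exact bot_le
    · -- W is positive and W ≤ f U, hence ImgPositive f U, so U is in the set
      have hWle : W ≤ f U := hT ▸ le_sSup hW
      have hUpos : ImgPositive f U := by
        intro S hS
        rw [map_sSup] at hS
        obtain ⟨x, hx⟩ := hTpos W hW (f '' S) (hWle.trans hS)
        obtain ⟨y, hy, _⟩ := hx
        exact ⟨y, hy⟩
      exact OrderHomClass.mono f (le_sSup ⟨le_rfl, hUpos⟩)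
  · rw [map_sSup]
    apply sSup_le
    rintro x ⟨V, ⟨hV, _⟩, rfl⟩
    exact hV
end

section
/- If G is a localic group, then its maximal locally positive sublocale G⁺ is a localic subgroup: the unit factors through G⁺, and the multiplication and inversion maps restrict to G⁺. -/
open CategoryTheory CategoryTheory.Limits

/-- Let `C` be a category with a terminal object and binary products (e.g. the
category of locales), and let `P` be the class of "locally positive" objects.
Suppose the terminal object is locally positive and locally positive objects are
closed under binary products.  Let `G` be a group object, given by its unit
`e : 1 ⟶ G`, multiplication `m : G ⨯ G ⟶ G` and inversion `ι : G ⟶ G`, and let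
`i : G⁺ ⟶ G` be the maximal locally positive subobject of `G`: `G⁺` is locally
positive, `i` is monic, and every morphism from a locally positive object to `G`
factors (uniquely) through `i`.  Then `G⁺` is a subgroup object: the unit factors
through `G⁺` and multiplication and inversion restrict to `G⁺`. -/
theorem stmt6 {C : Type u} [Category.{v} C] [HasTerminal C] [HasBinaryProducts C]
    (P : C → Prop) (hT : P (⊤_ C)) (hProd : ∀ X Y : C, P X → P Y → P (X ⨯ Y))
    (G Gp : C) (i : Gp ⟶ G) [Mono i] (hGp : P Gp)
    (hmax : ∀ (X : C), P X → ∀ f : X ⟶ G, ∃! g : X ⟶ Gp, g ≫ i = f)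
    (e : ⊤_ C ⟶ G) (m : G ⨯ G ⟶ G) (ι : G ⟶ G) :
    (∃ e' : ⊤_ C ⟶ Gp, e' ≫ i = e) ∧
    (∃ ι' : Gp ⟶ Gp, ι' ≫ i = i ≫ ι) ∧
    (∃ m' : Gp ⨯ Gp ⟶ Gp, m' ≫ i = prod.map i i ≫ m) := by
  refine ⟨?_, ?_, ?_⟩
  · obtain ⟨g, hg, -⟩ := hmax _ hT e
    exact ⟨g, hg⟩
  · obtain ⟨g, hg, -⟩ := hmax _ hGp (i ≫ ι)
    exact ⟨g, hg⟩
  · obtain ⟨g, hg, -⟩ := hmax _ (hProd _ _ hGp hGp) (prod.map i i ≫ m)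
    exact ⟨g, hg⟩
end

section
/- In a 2-category with (2,1)-pullbacks, for an object T the 'isotropy object' I_T defined as the pullback of the diagonal Δ : T → T × T along itself represents, for each object E, the groupoid of pairs (f, θ) where f : E → T is a 1-morphism and θ is a 2-automorphism of f. In particular the two projections I_T → T arising from the pullback square are isomorphic. -/
open CategoryTheory

universe v₁ v₂ u₁ u₂

variable (E : Type u₁) (T : Type u₂) [Category.{v₁} E] [Category.{v₂} T]

/-- An object of the iso-comma object (pseudo-pullback) of the diagonal
`Δ : T → T × T` along itself, evaluated at `E`: a pair of functors `f, f' : E ⥤ T`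
together with two natural isomorphisms `θ, θ' : f ≅ f'`. -/
structure PseudoPB where
  f : E ⥤ T
  f' : E ⥤ T
  θ : f ≅ f'
  θ' : f ≅ f'

/-- A morphism in the pseudo-pullback: a pair of natural transformations
compatible with the structural isomorphisms. -/
@[ext]
structure PseudoPBHom (A B : PseudoPB E T) where
  α : A.f ⟶ B.f
  α' : A.f' ⟶ B.f'
  w : A.θ.hom ≫ α' = α ≫ B.θ.hom
  w' : A.θ'.hom ≫ α' = α ≫ B.θ'.hom

instance : Category (PseudoPB E T) where
  Hom A B := PseudoPBHom E T A B
  id A := ⟨𝟙 A.f, 𝟙 A.f', by simp, by simp⟩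
  comp {A B C} g h := ⟨g.α ≫ h.α, g.α' ≫ h.α',
    by rw [← Category.assoc, g.w, Category.assoc, h.w, ← Category.assoc],
    by rw [← Category.assoc, g.w', Category.assoc, h.w', ← Category.assoc]⟩
  id_comp g := by apply PseudoPBHom.ext <;> simp
  comp_id g := by apply PseudoPBHom.ext <;> simp
  assoc g h k := by apply PseudoPBHom.ext <;> simp

/-- The 'isotropy groupoid' of `T` evaluated at `E`: pairs `(f, θ)` of a functor
`f : E ⥤ T` and a natural automorphism `θ` of `f`. -/
structure IsoPt where
  f : E ⥤ T
  θ : f ≅ f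

/-- Morphisms of pairs `(f, θ)`: natural transformations commuting with the
automorphisms. -/
@[ext]
structure IsoPtHom (A B : IsoPt E T) where
  α : A.f ⟶ B.f
  w : A.θ.hom ≫ α = α ≫ B.θ.hom

instance : Category (IsoPt E T) where
  Hom A B := IsoPtHom E T A B
  id A := ⟨𝟙 A.f, by simp⟩
  comp {A B C} g h := ⟨g.α ≫ h.α,
    by rw [← Category.assoc, g.w, Category.assoc, h.w, ← Category.assoc]⟩
  id_comp g := by apply IsoPtHom.ext; simp
  comp_id g := by apply IsoPtHom.ext; simp
  assoc g h k := by apply IsoPtHom.ext; simp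

/-- The comparison functor `(f, f', θ, θ') ↦ (f, θ'⁻¹ ∘ θ)`. -/
def comparison : PseudoPB E T ⥤ IsoPt E T where
  obj A := ⟨A.f, A.θ ≪≫ A.θ'.symm⟩
  map {A B} g := ⟨g.α, by
    dsimp
    have h2 : A.θ'.inv ≫ g.α = g.α' ≫ B.θ'.inv := by
      rw [Iso.inv_comp_eq, ← Category.assoc, g.w', Category.assoc, Iso.hom_inv_id,
        Category.comp_id]
    rw [Category.assoc, h2, ← Category.assoc, g.w, Category.assoc]⟩
  map_id A := by apply IsoPtHom.ext; rfl
  map_comp g h := by apply IsoPtHom.ext; rfl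

/-- The first projection `I_T → T` of the pseudo-pullback, `(f, f', θ, θ') ↦ f`. -/
def proj₁ : PseudoPB E T ⥤ (E ⥤ T) where
  obj A := A.f
  map g := g.α
  map_id A := rfl
  map_comp g h := rfl

/-- The second projection `I_T → T` of the pseudo-pullback, `(f, f', θ, θ') ↦ f'`. -/
def proj₂ : PseudoPB E T ⥤ (E ⥤ T) where
  obj A := A.f'
  map g := g.α'
  map_id A := rfl
  map_comp g h := rfl

/-- The pseudo-pullback of the diagonal `Δ : T → T × T` along itself represents the
groupoid of pairs `(f : E → T, θ)` with `θ` a 2-automorphism of `f`: the comparison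
functor `(f, f', θ₁, θ₂) ↦ (f, θ₂⁻¹ ∘ θ₁)` is an equivalence of categories
(naturally in `E`).  Moreover the two projections `I_T → T` are isomorphic. -/
theorem stmt8 : (comparison E T).IsEquivalence ∧ Nonempty (proj₁ E T ≅ proj₂ E T) := by
  constructor
  · constructor
    · constructor
      intro A B g h hyp
      have hα : g.α = h.α := congrArg IsoPtHom.α hyp
      apply PseudoPBHom.ext
      · exact hα
      · have e1 : g.α' = A.θ'.inv ≫ g.α ≫ B.θ'.hom := by
          rw [← g.w']; simp
        have e2 : h.α' = A.θ'.inv ≫ h.α ≫ B.θ'.hom := by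
          rw [← h.w']; simp
        rw [e1, e2, hα]
    · constructor
      intro A B β
      have hw := β.w
      simp only [comparison, Iso.trans_hom, Iso.symm_hom] at hw
      refine ⟨⟨β.α, A.θ'.inv ≫ β.α ≫ B.θ'.hom, ?_, ?_⟩, rfl⟩
      · have hw' := congrArg (· ≫ B.θ'.hom) hw
        simp only [Category.assoc, Iso.inv_hom_id, Category.comp_id] at hw'
        exact hw'
      · simp; rfl
    · constructor
      intro X
      refine ⟨⟨X.f, X.f, X.θ, Iso.refl X.f⟩, ⟨?_⟩⟩
      refine ⟨⟨𝟙 X.f, by simp [comparison]⟩, ⟨𝟙 X.f, by simp [comparison]⟩, ?_, ?_⟩ <;>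
        · apply IsoPtHom.ext
          exact Category.id_comp _
  · exact ⟨NatIso.ofComponents (fun A => A.θ) (fun {A B} g => g.w.symm)⟩
end

section
/- Let T be the category of functors from the category of finite nonempty sets to Set (copresheaves on FinSet_{≠∅}). If F is such a functor with the property that for every finite nonempty set X, every bijection σ : X ≅ X acts as the identity on F(X) (i.e., F(σ) = id), then F maps every map between finite nonempty sets to a bijection and is (naturally isomorphic to) a constant functor. -/
open CategoryTheory

/-- The category of finite nonempty sets. -/
abbrev FinSetPos := ObjectProperty.FullSubcategory (fun X : FintypeCat => Nonempty X)

/-- Let `F` be a copresheaf on the category of finite nonempty sets such that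
every bijection `σ : X ≅ X` acts as the identity on `F X`.  Then `F` sends every
map between finite nonempty sets to a bijection, and `F` is (naturally isomorphic
to) the constant functor with value `F 1`, where `1` is a one-element set. -/
theorem stmt14 (F : FinSetPos ⥤ Type u)
    (hF : ∀ (X : FinSetPos) (σ : X ≅ X), F.map σ.hom = 𝟙 (F.obj X)) :
    (∀ (X Y : FinSetPos) (h : X ⟶ Y), Function.Bijective (F.map h)) ∧
    Nonempty (F ≅ (Functor.const FinSetPos).obj
      (F.obj ⟨FintypeCat.of PUnit, ⟨PUnit.unit⟩⟩)) := by
  classical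
  set one : FinSetPos := ⟨FintypeCat.of PUnit, ⟨PUnit.unit⟩⟩ with hone
  -- terminal maps
  let t : ∀ X : FinSetPos, X ⟶ one := fun X => ObjectProperty.homMk (FintypeCat.homMk fun _ => PUnit.unit)
  -- constant endomaps act as identity
  have hconst : ∀ (X : FinSetPos) (x₀ : X.obj),
      F.map (show X ⟶ X from ObjectProperty.homMk (FintypeCat.homMk fun _ => x₀)) = 𝟙 (F.obj X) := by
    intro X x₀
    let D : FinSetPos := ⟨FintypeCat.of (X.obj ⊕ X.obj), ⟨Sum.inl x₀⟩⟩
    let i₁ : X ⟶ D := ObjectProperty.homMk (FintypeCat.homMk fun x => Sum.inl x)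
    let i₂ : X ⟶ D := ObjectProperty.homMk (FintypeCat.homMk fun x => Sum.inr x)
    let σ : D ≅ D :=
      { hom := ObjectProperty.homMk (FintypeCat.homMk fun s => Sum.swap s)
        inv := ObjectProperty.homMk (FintypeCat.homMk fun s => Sum.swap s)
        hom_inv_id := ObjectProperty.hom_ext _ (FintypeCat.hom_ext _ _ fun s => Sum.swap_swap s)
        inv_hom_id := ObjectProperty.hom_ext _ (FintypeCat.hom_ext _ _ fun s => Sum.swap_swap s) }
    let d : D ⟶ X := ObjectProperty.homMk (FintypeCat.homMk fun s => Sum.elim id (fun _ => x₀) s)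
    have h1 : i₁ ≫ d = 𝟙 X := rfl
    have h2 : i₂ ≫ d = (show X ⟶ X from ObjectProperty.homMk (FintypeCat.homMk fun _ => x₀)) := rfl
    have h3 : i₁ ≫ σ.hom = i₂ := rfl
    calc F.map (show X ⟶ X from ObjectProperty.homMk (FintypeCat.homMk fun _ => x₀))
        = F.map (i₂ ≫ d) := by rw [h2]
      _ = F.map i₂ ≫ F.map d := F.map_comp _ _
      _ = F.map (i₁ ≫ σ.hom) ≫ F.map d := by rw [h3]
      _ = (F.map i₁ ≫ F.map σ.hom) ≫ F.map d := by rw [F.map_comp]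
      _ = F.map i₁ ≫ F.map d := by rw [hF D σ]; simp
      _ = F.map (i₁ ≫ d) := (F.map_comp _ _).symm
      _ = 𝟙 (F.obj X) := by rw [h1, F.map_id]
  -- terminal maps are inverted by F
  have htbij : ∀ X : FinSetPos, Function.Bijective (F.map (t X)) := by
    intro X
    obtain ⟨x₀⟩ := X.property
    let p : one ⟶ X := ObjectProperty.homMk (FintypeCat.homMk fun _ => x₀)
    have hpt : t X ≫ p = (show X ⟶ X from ObjectProperty.homMk (FintypeCat.homMk fun _ => x₀)) := rfl
    have htp : p ≫ t X = 𝟙 one := rfl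
    have h1 : F.map (t X) ≫ F.map p = 𝟙 (F.obj X) := by
      rw [← F.map_comp, hpt, hconst]
    have h2 : F.map p ≫ F.map (t X) = 𝟙 (F.obj one) := by
      rw [← F.map_comp, htp, F.map_id]
    refine Function.bijective_iff_has_inverse.mpr ⟨F.map p, ?_, ?_⟩
    · intro a; simpa using ConcreteCategory.congr_hom h1 a
    · intro a; simpa using ConcreteCategory.congr_hom h2 a
  have hbij : ∀ (X Y : FinSetPos) (h : X ⟶ Y), Function.Bijective (F.map h) := by
    intro X Y h
    have hcomm : h ≫ t Y = t X := rfl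
    have key : ∀ x, F.map (t Y) (F.map h x) = F.map (t X) x := by
      intro x
      have := ConcreteCategory.congr_hom (show F.map h ≫ F.map (t Y) = F.map (t X) by
        rw [← F.map_comp, hcomm]) x
      simpa using this
    constructor
    · intro a b hab
      apply (htbij X).injective
      rw [← key a, ← key b, hab]
    · intro y
      obtain ⟨x, hx⟩ := (htbij X).surjective (F.map (t Y) y)
      exact ⟨x, (htbij Y).injective (by rw [key x, hx])⟩
  refine ⟨hbij, ⟨NatIso.ofComponents
    (fun X => (Equiv.ofBijective (F.map (t X)) (htbij X)).toIso) ?_⟩⟩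
  intro X Y f
  have hcomm : f ≫ t Y = t X := rfl
  simp only [Functor.const_obj_obj, Functor.const_obj_map, Category.comp_id]
  refine ConcreteCategory.hom_ext _ _ fun x => ?_
  have := ConcreteCategory.congr_hom (show F.map f ≫ F.map (t Y) = F.map (t X) by
    rw [← F.map_comp, hcomm]) x
  simpa using this
end
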